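/- arXiv:1510.00997 — 2 statements merged into one kernel-verified Lean document; each statement's English description precedes it below -/
import Mathlib

section
/- Let k be an algebraically closed field of characteristic 2, σ the automorphism of SL₃(k) given by σ(g) = J·(gᵀ)⁻¹·J with J the 3×3 antidiagonal permutation matrix, G := SL₃(k) ⋊ ⟨σ⟩, and ε(x) := I₃ + x·E₁₃ ∈ SL₃(k). Let c ∈ kˣ with c³ ≠ 1 and set t := diag(c, c⁻², c) ∈ SL₃(k). If a, b ∈ k and there exists g ∈ G satisfying g·(t, 1)·g⁻¹ = (t, 1), g·(ε(a), σ)·g⁻¹ = (ε(b), σ), and g·(ε(1), 1)·g⁻¹ = (ε(1), 1), then a = b. (Consequently the homomorphisms ρ_a of Theorem 1.11 are pairwise non-G-conjugate for distinct a.) -/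
set_option linter.unusedSectionVars false

open Matrix

noncomputable section

/-- `SL₃(k)`. -/
abbrev SL3 (k : Type*) [Field k] := Matrix.SpecialLinearGroup (Fin 3) k

/-- The 3×3 antidiagonal permutation matrix `J`. -/
def Jmat (k : Type*) [Field k] : Matrix (Fin 3) (Fin 3) k := !![0,0,1;0,1,0;1,0,0]

lemma Jmat_mul_Jmat (k : Type*) [Field k] : Jmat k * Jmat k = 1 := by
  ext i j
  fin_cases i <;> fin_cases j <;>
    simp [Jmat, Matrix.mul_apply, Fin.sum_univ_succ, Matrix.one_apply]

lemma Jmat_det (k : Type*) [Field k] [CharP k 2] : (Jmat k).det = 1 := by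
  simp [Jmat, Matrix.det_fin_three, CharTwo.neg_eq]

variable (k : Type*) [Field k] [CharP k 2]

/-- `J` as an element of `SL₃(k)` (its determinant is `-1 = 1` in characteristic two). -/
def JSL : SL3 k := ⟨Jmat k, Jmat_det k⟩

lemma JSL_mul_JSL : JSL k * JSL k = 1 := Subtype.ext (by
  show Jmat k * Jmat k = 1; exact Jmat_mul_Jmat k)

/-- Transpose, as a map `SL₃(k) → SL₃(k)`. -/
def TSL (g : SL3 k) : SL3 k :=
  ⟨(g : Matrix (Fin 3) (Fin 3) k)ᵀ, by simp⟩

lemma TSL_mul (g h : SL3 k) : TSL k (g * h) = TSL k h * TSL k g :=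
  Subtype.ext (by simp [TSL, Matrix.transpose_mul]; rfl)

lemma TSL_inv (g : SL3 k) : TSL k g⁻¹ = (TSL k g)⁻¹ :=
  Subtype.ext (by
    simp [TSL, Matrix.SpecialLinearGroup.coe_inv, Matrix.adjugate_transpose]; rfl)

lemma TSL_TSL (g : SL3 k) : TSL k (TSL k g) = g := Subtype.ext (by simp [TSL])

/-- The automorphism `g ↦ (gᵀ)⁻¹` of `SL₃(k)`. -/
def transposeInvAut : MulAut (SL3 k) :=
{ toFun := fun g => TSL k g⁻¹
  invFun := fun g => TSL k g⁻¹
  left_inv := fun g => by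
    show TSL k (TSL k g⁻¹)⁻¹ = g
    simp only [TSL_inv, TSL_TSL, inv_inv]
  right_inv := fun g => by
    show TSL k (TSL k g⁻¹)⁻¹ = g
    simp only [TSL_inv, TSL_TSL, inv_inv]
  map_mul' := fun g h => by
    show TSL k (g * h)⁻¹ = TSL k g⁻¹ * TSL k h⁻¹
    rw [_root_.mul_inv_rev, TSL_mul] }

/-- The order-2 (graph) automorphism `σ` of `SL₃(k)` given by `σ(g) = J ⬝ (gᵀ)⁻¹ ⬝ J`
(recall that `J⁻¹ = J`). -/
def sigmaAut : MulAut (SL3 k) :=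
  (transposeInvAut k).trans (MulAut.conj (JSL k))

/-- The unipotent element `ε(x) = I₃ + x·E₁₃` of `SL₃(k)`. -/
def eps (x : k) : SL3 k :=
  ⟨!![1,0,x;0,1,0;0,0,1], by simp [Matrix.det_fin_three]⟩

/-- The non-connected reductive group `G = SL₃(k) ⋊ ⟨σ⟩`. -/
abbrev Ghat := SL3 k ⋊[(Subgroup.zpowers (sigmaAut k)).subtype] (Subgroup.zpowers (sigmaAut k))

/-- `σ` as an element of the subgroup `⟨σ⟩` of `Aut(SL₃(k))`. -/
def sigEl : Subgroup.zpowers (sigmaAut k) := ⟨sigmaAut k, Subgroup.mem_zpowers _⟩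

end

/-- The diagonal element `t = diag(c, c⁻², c)` of `SL₃(k)`. -/
noncomputable def tdiag (k : Type*) [Field k] (c : k) (hc : c ≠ 0) : SL3 k :=
  ⟨!![c,0,0;0,(c^2)⁻¹,0;0,0,c], by
    simp [Matrix.det_fin_three]
    try field_simp
    try ring⟩


section Aux
variable (k : Type*) [Field k] [CharP k 2]

lemma JSL_inv : (JSL k)⁻¹ = JSL k := inv_eq_of_mul_eq_one_right (JSL_mul_JSL k)

lemma TSL_JSL : TSL k (JSL k) = JSL k := by
  apply Subtype.ext
  show (Jmat k)ᵀ = Jmat k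
  ext i j
  fin_cases i <;> fin_cases j <;> simp [Jmat]

lemma sigmaAut_apply (g : SL3 k) : sigmaAut k g = JSL k * TSL k g⁻¹ * (JSL k)⁻¹ := rfl

lemma sigma_sigma (g : SL3 k) : sigmaAut k (sigmaAut k g) = g := by
  rw [sigmaAut_apply, sigmaAut_apply, JSL_inv]
  rw [_root_.mul_inv_rev, _root_.mul_inv_rev, TSL_mul, TSL_mul, TSL_inv, TSL_JSL, JSL_inv,
    ← TSL_inv, inv_inv, TSL_TSL]
  calc JSL k * (JSL k * g * JSL k) * JSL k
      = (JSL k * JSL k) * g * (JSL k * JSL k) := by group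
    _ = g := by rw [JSL_mul_JSL]; group

lemma sigma_sq : sigmaAut k * sigmaAut k = 1 :=
  MulEquiv.ext fun g => sigma_sigma k g

lemma sigEl_coe : ((sigEl k : Subgroup.zpowers (sigmaAut k)) : MulAut (SL3 k)) = sigmaAut k := rfl

lemma zpowers_cases (h : Subgroup.zpowers (sigmaAut k)) : h = 1 ∨ h = sigEl k := by
  obtain ⟨z, hz⟩ := Subgroup.mem_zpowers_iff.mp h.2
  rcases Int.even_or_odd z with ⟨m, hm⟩ | ⟨m, hm⟩
  · left
    apply Subtype.ext
    rw [← hz, hm, ← two_mul, _root_.zpow_mul,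
      show ((sigmaAut k) ^ (2:ℤ)) = 1 by rw [zpow_two, sigma_sq], _root_.one_zpow]
    rfl
  · right
    apply Subtype.ext
    rw [← hz, hm, _root_.zpow_add, zpow_one, _root_.zpow_mul,
      show ((sigmaAut k) ^ (2:ℤ)) = 1 by rw [zpow_two, sigma_sq], _root_.one_zpow, one_mul]
    rfl

lemma sigma_coe (n : SL3 k) :
    ((sigmaAut k n : SL3 k) : Matrix (Fin 3) (Fin 3) k)
      = Jmat k * ((n⁻¹ : SL3 k) : Matrix (Fin 3) (Fin 3) k)ᵀ * Jmat k := by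
  rw [sigmaAut_apply, JSL_inv]
  rfl

lemma sigma_inv_coe (n : SL3 k) :
    (((sigmaAut k n)⁻¹ : SL3 k) : Matrix (Fin 3) (Fin 3) k)
      = Jmat k * ((n : SL3 k) : Matrix (Fin 3) (Fin 3) k)ᵀ * Jmat k := by
  rw [← map_inv, sigma_coe, inv_inv]

end Aux

lemma tdiag_inv (k : Type*) [Field k] [CharP k 2] (c : k) (hc0 : c ≠ 0) :
    (tdiag k c hc0)⁻¹ = ⟨!![c⁻¹,0,0;0,c^2,0;0,0,c⁻¹], by
      simp [Matrix.det_fin_three]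
      field_simp⟩ := by
  apply inv_eq_of_mul_eq_one_right
  apply Subtype.ext
  show (tdiag k c hc0 : Matrix (Fin 3) (Fin 3) k) * _ = (1 : Matrix (Fin 3) (Fin 3) k)
  ext i j
  fin_cases i <;> fin_cases j <;>
    simp [tdiag, Matrix.mul_apply, Fin.sum_univ_three, Matrix.one_apply, hc0,
      Matrix.vecHead, Matrix.vecTail] <;>
    field_simp

/-- If `c ∈ kˣ` with `c³ ≠ 1` and `g ∈ G = SL₃(k) ⋊ ⟨σ⟩` conjugates `(t, 1)` to itself,
`(ε a, σ)` to `(ε b, σ)`, and `(ε 1, 1)` to itself, then `a = b`: the representations `ρₐ`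
are pairwise non-`G`-conjugate for distinct `a`. -/
theorem stmt_2 (k : Type*) [Field k] [IsAlgClosed k] [CharP k 2]
    (c : k) (hc0 : c ≠ 0) (hc3 : c ^ 3 ≠ 1) (a b : k) (g : Ghat k)
    (h1 : g * ⟨tdiag k c hc0, 1⟩ * g⁻¹ = ⟨tdiag k c hc0, 1⟩)
    (h2 : g * ⟨eps k a, sigEl k⟩ * g⁻¹ = ⟨eps k b, sigEl k⟩)
    (h3 : g * ⟨eps k 1, 1⟩ * g⁻¹ = ⟨eps k 1, 1⟩) :
    a = b := by
  have two : (2 : k) = 0 := by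
    have := CharP.cast_eq_zero k 2
    exact_mod_cast this
  have e1 := congrArg SemidirectProduct.left h1
  have e2 := congrArg SemidirectProduct.left h2
  have e3 := congrArg SemidirectProduct.left h3
  simp only [SemidirectProduct.mul_left, SemidirectProduct.mul_right,
    SemidirectProduct.inv_left, SemidirectProduct.inv_right, mul_one, one_mul,
    Subgroup.coe_subtype, map_inv, _root_.map_mul] at e1 e2 e3
  rcases zpowers_cases k g.right with hr | hr
  · -- g.right = 1
    rw [hr] at e1 e2 e3
    simp only [OneMemClass.coe_one, MulAut.one_apply, inv_one, sigEl_coe, one_mul] at e1 e2 e3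
    set N : Matrix (Fin 3) (Fin 3) k := (g.left : Matrix (Fin 3) (Fin 3) k) with hN
    have E1 : N * (tdiag k c hc0 : Matrix (Fin 3) (Fin 3) k)
        = (tdiag k c hc0 : Matrix (Fin 3) (Fin 3) k) * N := by
      have h := mul_inv_eq_iff_eq_mul.mp e1
      have := congrArg (fun m : SL3 k => (m : Matrix (Fin 3) (Fin 3) k)) h
      simpa [Matrix.SpecialLinearGroup.coe_mul] using this
    have E3 : N * (eps k 1 : Matrix (Fin 3) (Fin 3) k)
        = (eps k 1 : Matrix (Fin 3) (Fin 3) k) * N := by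
      have h := mul_inv_eq_iff_eq_mul.mp e3
      have := congrArg (fun m : SL3 k => (m : Matrix (Fin 3) (Fin 3) k)) h
      simpa [Matrix.SpecialLinearGroup.coe_mul] using this
    have E2 : N * (eps k a : Matrix (Fin 3) (Fin 3) k) * (Jmat k * Nᵀ * Jmat k)
        = (eps k b : Matrix (Fin 3) (Fin 3) k) := by
      have h := congrArg (fun m : SL3 k => (m : Matrix (Fin 3) (Fin 3) k)) e2
      simp only [Matrix.SpecialLinearGroup.coe_mul] at h
      rw [sigma_inv_coe] at h
      exact h
    have hne : (c^2)⁻¹ ≠ c := by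
      intro h
      apply hc3
      field_simp at h
      linear_combination -h
    -- zero entries from E1
    have h01 : N 0 1 = 0 := by
      have q := congrFun (congrFun E1 0) 1
      simp [Matrix.mul_apply, Fin.sum_univ_three, tdiag, Matrix.vecHead, Matrix.vecTail] at q
      by_contra hx
      exact hne (mul_left_cancel₀ hx (by linear_combination q))
    have h10 : N 1 0 = 0 := by
      have q := congrFun (congrFun E1 1) 0
      simp [Matrix.mul_apply, Fin.sum_univ_three, tdiag, Matrix.vecHead, Matrix.vecTail] at q
      by_contra hx
      exact hne (mul_left_cancel₀ hx (by linear_combination -q))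
    have h12 : N 1 2 = 0 := by
      have q := congrFun (congrFun E1 1) 2
      simp [Matrix.mul_apply, Fin.sum_univ_three, tdiag, Matrix.vecHead, Matrix.vecTail] at q
      by_contra hx
      exact hne (mul_left_cancel₀ hx (by linear_combination -q))
    have h21 : N 2 1 = 0 := by
      have q := congrFun (congrFun E1 2) 1
      simp [Matrix.mul_apply, Fin.sum_univ_three, tdiag, Matrix.vecHead, Matrix.vecTail] at q
      by_contra hx
      exact hne (mul_left_cancel₀ hx (by linear_combination q))
    -- entries from E3
    have h20 : N 2 0 = 0 := by
      have q := congrFun (congrFun E3 0) 0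
      simp [Matrix.mul_apply, Fin.sum_univ_three, eps, Matrix.vecHead, Matrix.vecTail] at q
      exact q
    have h22 : N 2 2 = N 0 0 := by
      have q := congrFun (congrFun E3 0) 2
      simp [Matrix.mul_apply, Fin.sum_univ_three, eps, Matrix.vecHead, Matrix.vecTail] at q
      linear_combination -q
    -- entries from E2
    have hC : Jmat k * Nᵀ * Jmat k
        = !![N 2 2, N 1 2, N 0 2; N 2 1, N 1 1, N 0 1; N 2 0, N 1 0, N 0 0] := by
      ext i j
      fin_cases i <;> fin_cases j <;>
        simp [Jmat, Matrix.mul_apply, Matrix.vecMul, dotProduct,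
          Fin.sum_univ_three, Matrix.transpose_apply, Matrix.vecHead, Matrix.vecTail]
    rw [hC] at E2
    have q00 := congrFun (congrFun E2 0) 0
    have q02 := congrFun (congrFun E2 0) 2
    simp [Matrix.mul_apply, Fin.sum_univ_three, eps, Jmat, Matrix.transpose_apply,
      Matrix.vecHead, Matrix.vecTail, h01, h10, h12, h21, h20, h22] at q00 q02
    linear_combination -a * q00 + q02 - (N 0 0 * N 0 2) * two
  · -- g.right = σ : contradiction via trace
    rw [hr] at e1
    simp only [sigEl_coe, MulAut.inv_def, MulEquiv.apply_symm_apply] at e1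
    exfalso
    have hst : sigmaAut k (tdiag k c hc0)
        = (⟨!![c⁻¹,0,0;0,c^2,0;0,0,c⁻¹], by
            simp [Matrix.det_fin_three]
            field_simp⟩ : SL3 k) := by
      rw [show (⟨!![c⁻¹,0,0;0,c^2,0;0,0,c⁻¹], by
            simp [Matrix.det_fin_three]
            field_simp⟩ : SL3 k) = (tdiag k c hc0)⁻¹ from (tdiag_inv k c hc0).symm]
      apply Subtype.ext
      rw [sigma_coe, tdiag_inv]
      ext i j
      fin_cases i <;> fin_cases j <;>
        simp [Jmat, Matrix.mul_apply, Fin.sum_univ_three, Matrix.transpose,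
          Matrix.vecHead, Matrix.vecTail]
    have e1' : sigmaAut k (tdiag k c hc0) = g.left⁻¹ * (tdiag k c hc0 * g.left) :=
      eq_inv_mul_iff_mul_eq.mpr (mul_inv_eq_iff_eq_mul.mp e1)
    have tr := congrArg (fun m : SL3 k => Matrix.trace (m : Matrix (Fin 3) (Fin 3) k)) e1'
    simp only [hst, Matrix.SpecialLinearGroup.coe_mul] at tr
    rw [Matrix.trace_mul_comm, mul_assoc, ← Matrix.SpecialLinearGroup.coe_mul,
      mul_inv_cancel, Matrix.SpecialLinearGroup.coe_one, mul_one] at tr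
    simp [tdiag, Matrix.trace_fin_three] at tr
    have hc4 : c ^ 4 = 1 := by
      field_simp at tr
      have h5 : c ^ 5 = c := by linear_combination c * tr + (c^4 - c^2) * two
      exact mul_left_cancel₀ hc0 (show c * c^4 = c * 1 by linear_combination h5)
    have hpow : (c + 1) ^ 4 = 0 := by
      linear_combination hc4 + (2*c^3 + 3*c^2 + 2*c + 1) * two
    have hc1 : c = 1 := by
      have h0 : c + 1 = 0 := pow_eq_zero_iff (by norm_num) |>.mp hpow
      linear_combination h0 - two
    exact hc3 (by rw [hc1]; norm_num)
end

section
/- Let k be an algebraically closed field of characteristic 2 and let K ≤ S₈ be the subgroup generated by the permutations (1 7 5)(2 6 8), (1 2)(5 8)(6 7) and (1 2 7 5 4 8 6) (a group of order 42). Then the natural 8-dimensional permutation module k⁸, on which K acts by permuting the standard basis vectors, is a semisimple K-module: every K-invariant subspace of k⁸ admits a K-invariant direct complement. -/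
namespace Stmt13


/-- table of `σ⁻¹` for `σ = c[0,1,6,4,3,7,5]` -/
def vs : Fin 8 → Fin 8 := ![5, 0, 2, 4, 6, 7, 1, 3]
/-- table of `τ⁻¹` for `τ = (c[0,6,4]*c[1,5,7]) * (c[0,1]*c[4,7]*c[5,6])` -/
def ti : Fin 8 → Fin 8 := ![7, 4, 2, 3, 5, 0, 1, 6]
/-- table of `τ` -/
def tf : Fin 8 → Fin 8 := ![5, 6, 2, 3, 1, 4, 7, 0]

variable {k : Type*} [Field k]

/-- the common eigenvector for eigenvalue μ -/
def vec (μ : k) : Fin 8 → k := ![1, μ^6, 0, μ^3, μ^4, μ, μ^5, μ^2]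

/-- projection onto the `ζ^(7-s)` eigenspace (up to scalar) -/
def Pm (ζ : k) (s : ℕ) (x : Fin 8 → k) : Fin 8 → k :=
  fun i => ∑ j ∈ Finset.range 7, ζ ^ (s * j) * x (vs^[j] i)

/-- the T-component of `v` -/
def wv (v : Fin 8 → k) : Fin 8 → k :=
  fun i => if i = 2 then v 2 else (v 0 + v 1 + v 3 + v 4 + v 5 + v 6 + v 7)


/-- the 6-dimensional submodule -/
def Ssub (k : Type*) [Field k] : Submodule k (Fin 8 → k) where
  carrier := {v | v 2 = 0 ∧ ∑ i, v i = 0}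
  add_mem' := by
    rintro a b ⟨ha1, ha2⟩ ⟨hb1, hb2⟩
    refine ⟨by simp [ha1, hb1], ?_⟩
    simp only [Pi.add_apply, Finset.sum_add_distrib, ha2, hb2, add_zero]
  zero_mem' := by simp
  smul_mem' := by
    rintro c a ⟨ha1, ha2⟩
    refine ⟨by simp [ha1], ?_⟩
    simp only [Pi.smul_apply, smul_eq_mul, ← Finset.mul_sum, ha2, mul_zero]

/-- the 2-dimensional trivial submodule: vectors constant off coordinate 2 -/
def Tsub (k : Type*) [Field k] : Submodule k (Fin 8 → k) where
  carrier := {v | ∀ i, i ≠ 2 → v i = v 0}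
  add_mem' := by
    intro a b ha hb i hi
    simp [ha i hi, hb i hi]
  zero_mem' := by simp
  smul_mem' := by
    intro c a ha i hi
    simp [ha i hi]

lemma seven_eq_one (h2 : (2 : k) = 0) : (7 : k) = 1 := by linear_combination 3 * h2

lemma order_dvd {ζ : k} (hζ7 : ζ ^ 7 = 1) (hζ1 : ζ ≠ 1) (t : ℕ) (h : ζ ^ t = 1) : 7 ∣ t := by
  have h7 : Fact (Nat.Prime 7) := ⟨by norm_num⟩
  have ho : orderOf ζ = 7 := orderOf_eq_prime hζ7 hζ1
  exact ho ▸ orderOf_dvd_of_pow_eq_one h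

lemma geom7 (h2 : (2 : k) = 0) {ζ : k} (hζ7 : ζ ^ 7 = 1) (hζ1 : ζ ≠ 1) (j : ℕ) :
    (∑ s ∈ Finset.range 7, ζ ^ (s * j)) = if (7:ℕ) ∣ j then 1 else 0 := by
  have hrw : ∀ s, ζ ^ (s * j) = (ζ ^ j) ^ s := fun s => by rw [← pow_mul, mul_comm]
  simp only [hrw]
  by_cases h : (7:ℕ) ∣ j
  · obtain ⟨m, rfl⟩ := h
    have hz : ζ ^ (7 * m) = 1 := by rw [pow_mul, hζ7, one_pow]
    rw [if_pos ⟨m, rfl⟩, hz]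
    simp only [one_pow, Finset.sum_const, Finset.card_range, nsmul_eq_mul, mul_one]
    push_cast
    exact seven_eq_one h2
  · have hne : ζ ^ j ≠ 1 := fun hc => h (order_dvd hζ7 hζ1 j hc)
    rw [if_neg h, geom_sum_eq hne, ← pow_mul, mul_comm j 7, pow_mul, hζ7, one_pow,
      sub_self, zero_div]

lemma zeta_mod {ζ : k} (hζ7 : ζ ^ 7 = 1) (a : ℕ) : ζ ^ a = ζ ^ (a % 7) := by
  conv_lhs => rw [← Nat.div_add_mod a 7, pow_add, pow_mul, hζ7, one_pow, one_mul]

lemma eig_struct {μ : k} (x : Fin 8 → k) (hx2 : x 2 = 0)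
    (hx : ∀ i, x (vs i) = μ * x i) : x = x 0 • vec μ := by
  have a0 : x 5 = μ * x 0 := hx 0
  have a5 : x 7 = μ * x 5 := hx 5
  have a7 : x 3 = μ * x 7 := hx 7
  have a3 : x 4 = μ * x 3 := hx 3
  have a4 : x 6 = μ * x 4 := hx 4
  have a6 : x 1 = μ * x 6 := hx 6
  funext i
  simp only [Pi.smul_apply, smul_eq_mul]
  fin_cases i
  · show x 0 = x 0 * vec μ 0; show x 0 = x 0 * 1; ring
  · show x 1 = x 0 * vec μ 1; show x 1 = x 0 * μ^6
    linear_combination a6 + μ * a4 + μ^2 * a3 + μ^3 * a7 + μ^4 * a5 + μ^5 * a0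
  · show x 2 = x 0 * vec μ 2; show x 2 = x 0 * 0; rw [hx2]; ring
  · show x 3 = x 0 * vec μ 3; show x 3 = x 0 * μ^3
    linear_combination a7 + μ * a5 + μ^2 * a0
  · show x 4 = x 0 * vec μ 4; show x 4 = x 0 * μ^4
    linear_combination a3 + μ * a7 + μ^2 * a5 + μ^3 * a0
  · show x 5 = x 0 * vec μ 5; show x 5 = x 0 * μ
    linear_combination a0
  · show x 6 = x 0 * vec μ 6; show x 6 = x 0 * μ^5
    linear_combination a4 + μ * a3 + μ^2 * a7 + μ^3 * a5 + μ^4 * a0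
  · show x 7 = x 0 * vec μ 7; show x 7 = x 0 * μ^2
    linear_combination a5 + μ * a0

lemma pm_two {ζ : k} (s : ℕ) (x : Fin 8 → k) (hx2 : x 2 = 0) : Pm ζ s x 2 = 0 := by
  simp only [Pm, Finset.sum_range_succ, Finset.sum_range_zero,
    show vs^[0] (2:Fin 8) = 2 from rfl, show vs^[1] (2:Fin 8) = 2 from rfl,
    show vs^[2] (2:Fin 8) = 2 from rfl, show vs^[3] (2:Fin 8) = 2 from rfl,
    show vs^[4] (2:Fin 8) = 2 from rfl, show vs^[5] (2:Fin 8) = 2 from rfl,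
    show vs^[6] (2:Fin 8) = 2 from rfl, hx2]
  ring

lemma pm_eig {ζ : k} (hζ7 : ζ ^ 7 = 1) (s : ℕ) (hs : s ≤ 7) (x : Fin 8 → k) (i : Fin 8) :
    Pm ζ s x (vs i) = ζ ^ (7 - s) * Pm ζ s x i := by
  have hζ0 : ζ ≠ 0 := by
    intro h; rw [h] at hζ7; simp at hζ7
  have hzs7 : ζ ^ (s*6) * ζ ^ s = 1 := by
    rw [← pow_add, show s*6+s = 7*s by ring, pow_mul, hζ7, one_pow]
  have hcan : ζ ^ (7-s) * ζ ^ s = 1 := by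
    rw [← pow_add, Nat.sub_add_cancel hs, hζ7]
  have key : ζ ^ s * Pm ζ s x (vs i) = Pm ζ s x i := by
    simp only [Pm, Finset.sum_range_succ, Finset.sum_range_zero,
      ← Function.iterate_succ_apply, show vs^[7] i = i from by
        have : ∀ i, vs^[7] i = i := by decide
        exact this i]
    simp only [Function.iterate_zero_apply, Function.iterate_one]
    linear_combination (x i) * hzs7
  calc Pm ζ s x (vs i) = (ζ^(7-s) * ζ^s) * Pm ζ s x (vs i) := by rw [hcan]; ring
    _ = ζ^(7-s) * Pm ζ s x i := by rw [mul_assoc, key]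

lemma pm_recover (h2 : (2 : k) = 0) {ζ : k} (hζ7 : ζ ^ 7 = 1) (hζ1 : ζ ≠ 1)
    (x : Fin 8 → k) (i : Fin 8) : ∑ s ∈ Finset.range 7, Pm ζ s x i = x i := by
  simp only [Pm]
  rw [Finset.sum_comm]
  have : ∀ j ∈ Finset.range 7, (∑ s ∈ Finset.range 7, ζ ^ (s*j) * x (vs^[j] i))
      = (if (7:ℕ) ∣ j then 1 else 0) * x (vs^[j] i) := by
    intro j _
    rw [← Finset.sum_mul, geom7 h2 hζ7 hζ1]
  rw [Finset.sum_congr rfl this]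
  simp only [Finset.sum_range_succ, Finset.sum_range_zero]
  norm_num

lemma pm_zero_of_S (h2 : (2 : k) = 0) {ζ : k} (y : Fin 8 → k)
    (hy2 : y 2 = 0) (hys : ∑ i, y i = 0) : Pm ζ 0 y = 0 := by
  rw [Fin.sum_univ_eight] at hys
  have h0 : Pm ζ 0 y 0 = 0 := by
    simp only [Pm, Finset.sum_range_succ, Finset.sum_range_zero, Nat.zero_mul, pow_zero, one_mul,
      Function.iterate_zero_apply, zero_add, show vs^[1] (0:Fin 8) = 5 from rfl, show vs^[2] (0:Fin 8) = 7 from rfl, show vs^[3] (0:Fin 8) = 3 from rfl, show vs^[4] (0:Fin 8) = 4 from rfl, show vs^[5] (0:Fin 8) = 6 from rfl, show vs^[6] (0:Fin 8) = 1 from rfl]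
    linear_combination hys - hy2
  have h1 : Pm ζ 0 y 1 = 0 := by
    simp only [Pm, Finset.sum_range_succ, Finset.sum_range_zero, Nat.zero_mul, pow_zero, one_mul,
      Function.iterate_zero_apply, zero_add, show vs^[1] (1:Fin 8) = 0 from rfl, show vs^[2] (1:Fin 8) = 5 from rfl, show vs^[3] (1:Fin 8) = 7 from rfl, show vs^[4] (1:Fin 8) = 3 from rfl, show vs^[5] (1:Fin 8) = 4 from rfl, show vs^[6] (1:Fin 8) = 6 from rfl]
    linear_combination hys - hy2
  have h2 : Pm ζ 0 y 2 = 0 := by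
    simp only [Pm, Finset.sum_range_succ, Finset.sum_range_zero, Nat.zero_mul, pow_zero, one_mul,
      Function.iterate_zero_apply, zero_add, show vs^[1] (2:Fin 8) = 2 from rfl, show vs^[2] (2:Fin 8) = 2 from rfl, show vs^[3] (2:Fin 8) = 2 from rfl, show vs^[4] (2:Fin 8) = 2 from rfl, show vs^[5] (2:Fin 8) = 2 from rfl, show vs^[6] (2:Fin 8) = 2 from rfl]
    linear_combination 7 * hy2
  have h3 : Pm ζ 0 y 3 = 0 := by
    simp only [Pm, Finset.sum_range_succ, Finset.sum_range_zero, Nat.zero_mul, pow_zero, one_mul,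
      Function.iterate_zero_apply, zero_add, show vs^[1] (3:Fin 8) = 4 from rfl, show vs^[2] (3:Fin 8) = 6 from rfl, show vs^[3] (3:Fin 8) = 1 from rfl, show vs^[4] (3:Fin 8) = 0 from rfl, show vs^[5] (3:Fin 8) = 5 from rfl, show vs^[6] (3:Fin 8) = 7 from rfl]
    linear_combination hys - hy2
  have h4 : Pm ζ 0 y 4 = 0 := by
    simp only [Pm, Finset.sum_range_succ, Finset.sum_range_zero, Nat.zero_mul, pow_zero, one_mul,
      Function.iterate_zero_apply, zero_add, show vs^[1] (4:Fin 8) = 6 from rfl, show vs^[2] (4:Fin 8) = 1 from rfl, show vs^[3] (4:Fin 8) = 0 from rfl, show vs^[4] (4:Fin 8) = 5 from rfl, show vs^[5] (4:Fin 8) = 7 from rfl, show vs^[6] (4:Fin 8) = 3 from rfl]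
    linear_combination hys - hy2
  have h5 : Pm ζ 0 y 5 = 0 := by
    simp only [Pm, Finset.sum_range_succ, Finset.sum_range_zero, Nat.zero_mul, pow_zero, one_mul,
      Function.iterate_zero_apply, zero_add, show vs^[1] (5:Fin 8) = 7 from rfl, show vs^[2] (5:Fin 8) = 3 from rfl, show vs^[3] (5:Fin 8) = 4 from rfl, show vs^[4] (5:Fin 8) = 6 from rfl, show vs^[5] (5:Fin 8) = 1 from rfl, show vs^[6] (5:Fin 8) = 0 from rfl]
    linear_combination hys - hy2
  have h6 : Pm ζ 0 y 6 = 0 := by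
    simp only [Pm, Finset.sum_range_succ, Finset.sum_range_zero, Nat.zero_mul, pow_zero, one_mul,
      Function.iterate_zero_apply, zero_add, show vs^[1] (6:Fin 8) = 1 from rfl, show vs^[2] (6:Fin 8) = 0 from rfl, show vs^[3] (6:Fin 8) = 5 from rfl, show vs^[4] (6:Fin 8) = 7 from rfl, show vs^[5] (6:Fin 8) = 3 from rfl, show vs^[6] (6:Fin 8) = 4 from rfl]
    linear_combination hys - hy2
  have h7 : Pm ζ 0 y 7 = 0 := by
    simp only [Pm, Finset.sum_range_succ, Finset.sum_range_zero, Nat.zero_mul, pow_zero, one_mul,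
      Function.iterate_zero_apply, zero_add, show vs^[1] (7:Fin 8) = 3 from rfl, show vs^[2] (7:Fin 8) = 4 from rfl, show vs^[3] (7:Fin 8) = 6 from rfl, show vs^[4] (7:Fin 8) = 1 from rfl, show vs^[5] (7:Fin 8) = 0 from rfl, show vs^[6] (7:Fin 8) = 5 from rfl]
    linear_combination hys - hy2
  funext i
  fin_cases i
  exacts [h0, h1, h2, h3, h4, h5, h6, h7]

lemma iter_mem (p : Submodule k (Fin 8 → k))
    (hpς : ∀ v ∈ p, (fun i => v (vs i)) ∈ p) (j : ℕ) :
    ∀ x ∈ p, (fun i => x (vs^[j] i)) ∈ p := by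
  induction j with
  | zero => intro x hx; simpa using hx
  | succ n ih =>
    intro x hx
    have := hpς _ (ih x hx)
    have heq : (fun i => (fun i' => x (vs^[n] i')) (vs i)) = fun i => x (vs^[n+1] i) := by
      funext i; rw [Function.iterate_succ_apply]
    rwa [heq] at this

lemma pm_mem (ζ : k) (s : ℕ) (p : Submodule k (Fin 8 → k))
    (hpς : ∀ v ∈ p, (fun i => v (vs i)) ∈ p) (x : Fin 8 → k) (hx : x ∈ p) :
    Pm ζ s x ∈ p := by
  have heq : Pm ζ s x = ∑ j ∈ Finset.range 7, ζ ^ (s*j) • (fun i => x (vs^[j] i)) := by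
    funext i
    simp [Pm, Finset.sum_apply]
  rw [heq]
  exact Submodule.sum_mem _ fun j _ => Submodule.smul_mem _ _ (iter_mem p hpς j x hx)


lemma wv_eq_sum (h2 : (2 : k) = 0) (v : Fin 8 → k) :
    wv v = ∑ j ∈ Finset.range 7, (fun i => v (vs^[j] i)) := by
  have e0 : wv v (0:Fin 8) = (∑ j ∈ Finset.range 7, fun i => v (vs^[j] i)) (0:Fin 8) := by
    simp only [wv, Finset.sum_apply, Finset.sum_range_succ, Finset.sum_range_zero,
      Function.iterate_zero_apply, zero_add, show vs^[1] (0:Fin 8) = 5 from rfl, show vs^[2] (0:Fin 8) = 7 from rfl, show vs^[3] (0:Fin 8) = 3 from rfl, show vs^[4] (0:Fin 8) = 4 from rfl, show vs^[5] (0:Fin 8) = 6 from rfl, show vs^[6] (0:Fin 8) = 1 from rfl]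
    rw [if_neg (by decide)]; ring
  have e1 : wv v (1:Fin 8) = (∑ j ∈ Finset.range 7, fun i => v (vs^[j] i)) (1:Fin 8) := by
    simp only [wv, Finset.sum_apply, Finset.sum_range_succ, Finset.sum_range_zero,
      Function.iterate_zero_apply, zero_add, show vs^[1] (1:Fin 8) = 0 from rfl, show vs^[2] (1:Fin 8) = 5 from rfl, show vs^[3] (1:Fin 8) = 7 from rfl, show vs^[4] (1:Fin 8) = 3 from rfl, show vs^[5] (1:Fin 8) = 4 from rfl, show vs^[6] (1:Fin 8) = 6 from rfl]
    rw [if_neg (by decide)]; ring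
  have e2 : wv v (2:Fin 8) = (∑ j ∈ Finset.range 7, fun i => v (vs^[j] i)) (2:Fin 8) := by
    simp only [wv, Finset.sum_apply, Finset.sum_range_succ, Finset.sum_range_zero,
      Function.iterate_zero_apply, zero_add, show vs^[1] (2:Fin 8) = 2 from rfl, show vs^[2] (2:Fin 8) = 2 from rfl, show vs^[3] (2:Fin 8) = 2 from rfl, show vs^[4] (2:Fin 8) = 2 from rfl, show vs^[5] (2:Fin 8) = 2 from rfl, show vs^[6] (2:Fin 8) = 2 from rfl]
    simp only [if_true]
    linear_combination (-3 * v 2) * h2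
  have e3 : wv v (3:Fin 8) = (∑ j ∈ Finset.range 7, fun i => v (vs^[j] i)) (3:Fin 8) := by
    simp only [wv, Finset.sum_apply, Finset.sum_range_succ, Finset.sum_range_zero,
      Function.iterate_zero_apply, zero_add, show vs^[1] (3:Fin 8) = 4 from rfl, show vs^[2] (3:Fin 8) = 6 from rfl, show vs^[3] (3:Fin 8) = 1 from rfl, show vs^[4] (3:Fin 8) = 0 from rfl, show vs^[5] (3:Fin 8) = 5 from rfl, show vs^[6] (3:Fin 8) = 7 from rfl]
    rw [if_neg (by decide)]; ring
  have e4 : wv v (4:Fin 8) = (∑ j ∈ Finset.range 7, fun i => v (vs^[j] i)) (4:Fin 8) := by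
    simp only [wv, Finset.sum_apply, Finset.sum_range_succ, Finset.sum_range_zero,
      Function.iterate_zero_apply, zero_add, show vs^[1] (4:Fin 8) = 6 from rfl, show vs^[2] (4:Fin 8) = 1 from rfl, show vs^[3] (4:Fin 8) = 0 from rfl, show vs^[4] (4:Fin 8) = 5 from rfl, show vs^[5] (4:Fin 8) = 7 from rfl, show vs^[6] (4:Fin 8) = 3 from rfl]
    rw [if_neg (by decide)]; ring
  have e5 : wv v (5:Fin 8) = (∑ j ∈ Finset.range 7, fun i => v (vs^[j] i)) (5:Fin 8) := by
    simp only [wv, Finset.sum_apply, Finset.sum_range_succ, Finset.sum_range_zero,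
      Function.iterate_zero_apply, zero_add, show vs^[1] (5:Fin 8) = 7 from rfl, show vs^[2] (5:Fin 8) = 3 from rfl, show vs^[3] (5:Fin 8) = 4 from rfl, show vs^[4] (5:Fin 8) = 6 from rfl, show vs^[5] (5:Fin 8) = 1 from rfl, show vs^[6] (5:Fin 8) = 0 from rfl]
    rw [if_neg (by decide)]; ring
  have e6 : wv v (6:Fin 8) = (∑ j ∈ Finset.range 7, fun i => v (vs^[j] i)) (6:Fin 8) := by
    simp only [wv, Finset.sum_apply, Finset.sum_range_succ, Finset.sum_range_zero,
      Function.iterate_zero_apply, zero_add, show vs^[1] (6:Fin 8) = 1 from rfl, show vs^[2] (6:Fin 8) = 0 from rfl, show vs^[3] (6:Fin 8) = 5 from rfl, show vs^[4] (6:Fin 8) = 7 from rfl, show vs^[5] (6:Fin 8) = 3 from rfl, show vs^[6] (6:Fin 8) = 4 from rfl]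
    rw [if_neg (by decide)]; ring
  have e7 : wv v (7:Fin 8) = (∑ j ∈ Finset.range 7, fun i => v (vs^[j] i)) (7:Fin 8) := by
    simp only [wv, Finset.sum_apply, Finset.sum_range_succ, Finset.sum_range_zero,
      Function.iterate_zero_apply, zero_add, show vs^[1] (7:Fin 8) = 3 from rfl, show vs^[2] (7:Fin 8) = 4 from rfl, show vs^[3] (7:Fin 8) = 6 from rfl, show vs^[4] (7:Fin 8) = 1 from rfl, show vs^[5] (7:Fin 8) = 0 from rfl, show vs^[6] (7:Fin 8) = 5 from rfl]
    rw [if_neg (by decide)]; ring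
  funext i
  fin_cases i
  exacts [e0, e1, e2, e3, e4, e5, e6, e7]

lemma wv_mem (h2 : (2 : k) = 0) (p : Submodule k (Fin 8 → k))
    (hpς : ∀ v ∈ p, (fun i => v (vs i)) ∈ p) (v : Fin 8 → k) (hv : v ∈ p) : wv v ∈ p := by
  rw [wv_eq_sum h2]
  exact Submodule.sum_mem _ fun j _ => iter_mem p hpς j v hv

lemma key (h2 : (2 : k) = 0) {ζ : k} (hζ7 : ζ ^ 7 = 1) (hζ1 : ζ ≠ 1)
    (p : Submodule k (Fin 8 → k))
    (hpς : ∀ v ∈ p, (fun i => v (vs i)) ∈ p)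
    (hpτ : ∀ v ∈ p, (fun i => v (ti i)) ∈ p)
    (w : Fin 8 → k) (hw : w ∈ p) (hw2 : w 2 = 0) (hwsum : ∑ i, w i = 0) (hw0 : w ≠ 0) :
    ∀ y : Fin 8 → k, y 2 = 0 → (∑ i, y i = 0) → y ∈ p := by
  -- transport along τ
  have hticonj : ∀ i, ti (vs i) = vs (vs (vs (vs (vs (ti i))))) := by decide
  have hcomp : ∀ j, ti (tf j) = j := by decide
  have step : ∀ (μ : k) (x : Fin 8 → k), x ∈ p → x 2 = 0 → (∀ i, x (vs i) = μ * x i) → x ≠ 0 →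
      (fun i => x (ti i)) ∈ p ∧ (fun i => x (ti i)) 2 = 0 ∧
      (∀ i, (fun i => x (ti i)) (vs i) = μ ^ 5 * (fun i => x (ti i)) i) ∧
      (fun i => x (ti i)) ≠ 0 := by
    intro μ x hxp hx2 hx hx0
    refine ⟨hpτ x hxp, hx2, ?_, ?_⟩
    · intro i
      show x (ti (vs i)) = μ ^ 5 * x (ti i)
      rw [hticonj i, hx, hx, hx, hx, hx]; ring
    · intro hz
      apply hx0
      funext j
      calc x j = x (ti (tf j)) := by rw [hcomp]
        _ = (fun i => x (ti i)) (tf j) := rfl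
        _ = 0 := by rw [hz]; rfl
  -- from a nonzero eigenvector in p, extract the canonical one
  have getvec : ∀ (μ : k) (x : Fin 8 → k), x ∈ p → x 2 = 0 → (∀ i, x (vs i) = μ * x i) →
      x ≠ 0 → vec μ ∈ p := by
    intro μ x hxp hx2 hx hx0
    have hst := eig_struct x hx2 hx
    have hx00 : x 0 ≠ 0 := fun h0 => hx0 (by rw [hst, h0, zero_smul])
    have hm := p.smul_mem (x 0)⁻¹ hxp
    rw [hst, smul_smul] at hm
    simp only [Pi.smul_apply, smul_eq_mul, show vec μ 0 = (1:k) from rfl, mul_one] at hm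
    rwa [inv_mul_cancel₀ hx00, one_smul] at hm
  -- find a nonvanishing projection of w
  have hP0 : Pm ζ 0 w = 0 := pm_zero_of_S h2 w hw2 hwsum
  have hex : ∃ s0, (1 ≤ s0 ∧ s0 ≤ 6) ∧ Pm ζ s0 w ≠ 0 := by
    by_contra hc
    push_neg at hc
    apply hw0
    funext i
    have h := pm_recover h2 hζ7 hζ1 w i
    simp only [Finset.sum_range_succ, Finset.sum_range_zero, zero_add] at h
    rw [hP0, hc 1 ⟨by norm_num, by norm_num⟩, hc 2 ⟨by norm_num, by norm_num⟩,
      hc 3 ⟨by norm_num, by norm_num⟩, hc 4 ⟨by norm_num, by norm_num⟩,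
      hc 5 ⟨by norm_num, by norm_num⟩, hc 6 ⟨by norm_num, by norm_num⟩] at h
    simpa using h.symm
  obtain ⟨s0, ⟨hs1, hs6⟩, hPs0⟩ := hex
  -- chain of eigenvectors
  have hx0p : Pm ζ s0 w ∈ p := pm_mem ζ s0 p hpς w hw
  have hx02 : Pm ζ s0 w 2 = 0 := pm_two s0 w hw2
  have hx0e : ∀ i, Pm ζ s0 w (vs i) = ζ ^ (7 - s0) * Pm ζ s0 w i :=
    fun i => pm_eig hζ7 s0 (by omega) w i
  have hv0 : vec (ζ ^ (7 - s0)) ∈ p := getvec _ _ hx0p hx02 hx0e hPs0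
  have hpow5 : ∀ (a : ℕ) (x : Fin 8 → k), (∀ i, x (vs i) = ζ ^ a * x i) →
      (∀ i, x (vs i) = ζ ^ a * x i) := fun _ _ h => h
  obtain ⟨hx1p, hx12, hx1e, hx10⟩ := step _ _ hx0p hx02 hx0e hPs0
  simp only [← pow_mul] at hx1e
  have hv1 : vec (ζ ^ ((7 - s0) * 5)) ∈ p := getvec _ _ hx1p hx12 hx1e hx10
  obtain ⟨hx2p, hx22, hx2e, hx20⟩ := step _ _ hx1p hx12 hx1e hx10
  simp only [← pow_mul] at hx2e
  have hv2 : vec (ζ ^ ((7 - s0) * 5 * 5)) ∈ p := getvec _ _ hx2p hx22 hx2e hx20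
  obtain ⟨hx3p, hx32, hx3e, hx30⟩ := step _ _ hx2p hx22 hx2e hx20
  simp only [← pow_mul] at hx3e
  have hv3 : vec (ζ ^ ((7 - s0) * 5 * 5 * 5)) ∈ p := getvec _ _ hx3p hx32 hx3e hx30
  obtain ⟨hx4p, hx42, hx4e, hx40⟩ := step _ _ hx3p hx32 hx3e hx30
  simp only [← pow_mul] at hx4e
  have hv4 : vec (ζ ^ ((7 - s0) * 5 * 5 * 5 * 5)) ∈ p := getvec _ _ hx4p hx42 hx4e hx40
  obtain ⟨hx5p, hx52, hx5e, hx50⟩ := step _ _ hx4p hx42 hx4e hx40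
  simp only [← pow_mul] at hx5e
  have hv5 : vec (ζ ^ ((7 - s0) * 5 * 5 * 5 * 5 * 5)) ∈ p := getvec _ _ hx5p hx52 hx5e hx50
  -- reduce exponents mod 7
  rw [zeta_mod hζ7] at hv0 hv1 hv2 hv3 hv4 hv5
  -- coverage of all residues
  have hcover : ∀ r : ℕ, 1 ≤ r → r ≤ 6 → vec (ζ ^ r) ∈ p := by
    intro r hr1 hr6
    have : r = r % 7 := by omega
    rw [this, ← zeta_mod hζ7, zeta_mod hζ7]
    interval_cases r <;> interval_cases s0 <;>
      first
        | (norm_num at hv0 ⊢; exact hv0)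
        | (norm_num at hv1 ⊢; exact hv1)
        | (norm_num at hv2 ⊢; exact hv2)
        | (norm_num at hv3 ⊢; exact hv3)
        | (norm_num at hv4 ⊢; exact hv4)
        | (norm_num at hv5 ⊢; exact hv5)
  -- endgame
  intro y hy2 hysum
  have hy0 : Pm ζ 0 y = 0 := pm_zero_of_S h2 y hy2 hysum
  have hyeq : y = ∑ s ∈ Finset.range 7, Pm ζ s y := by
    funext i
    rw [← pm_recover h2 hζ7 hζ1 y i]
    simp [Finset.sum_apply]
  rw [hyeq]
  refine Submodule.sum_mem _ ?_
  intro s hs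
  rw [Finset.mem_range] at hs
  rcases Nat.eq_zero_or_pos s with h0 | h1
  · rw [h0, hy0]; exact p.zero_mem
  · have hse : Pm ζ s y = (Pm ζ s y 0) • vec (ζ ^ (7 - s)) :=
      eig_struct _ (pm_two s y hy2) (fun i => pm_eig hζ7 s (by omega) y i)
    rw [hse]
    exact p.smul_mem _ (hcover (7 - s) (by omega) (by omega))

lemma mem_Ssub {v : Fin 8 → k} : v ∈ Ssub k ↔ (v 2 = 0 ∧ ∑ i, v i = 0) := Iff.rfl

lemma mem_Tsub {v : Fin 8 → k} : v ∈ Tsub k ↔ ∀ i, i ≠ 2 → v i = v 0 := Iff.rfl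

lemma wv_in_T (v : Fin 8 → k) : wv v ∈ Tsub k := by
  rw [mem_Tsub]
  intro i hi
  simp [wv, if_neg hi]

lemma sub_wv_in_S (h2 : (2 : k) = 0) (v : Fin 8 → k) : v - wv v ∈ Ssub k := by
  rw [mem_Ssub]
  constructor
  · simp [wv]
  · rw [Fin.sum_univ_eight]
    simp only [Pi.sub_apply, wv]
    simp only [if_true]
    rw [if_neg (by decide : ¬(0:Fin 8) = 2), if_neg (by decide : ¬(1:Fin 8) = 2),
      if_neg (by decide : ¬(3:Fin 8) = 2),
      if_neg (by decide : ¬(4:Fin 8) = 2), if_neg (by decide : ¬(5:Fin 8) = 2),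
      if_neg (by decide : ¬(6:Fin 8) = 2), if_neg (by decide : ¬(7:Fin 8) = 2)]
    linear_combination (-3 * (v 0 + v 1 + v 3 + v 4 + v 5 + v 6 + v 7)) * h2

lemma TS_inter (h2 : (2 : k) = 0) : Tsub k ⊓ Ssub k = ⊥ := by
  rw [eq_bot_iff]
  rintro v ⟨hT, hS⟩
  have hT : ∀ i : Fin 8, i ≠ 2 → v i = v 0 := hT
  have hS : v 2 = 0 ∧ ∑ i, v i = 0 := hS
  obtain ⟨hv2, hsum⟩ := hS
  rw [Fin.sum_univ_eight] at hsum
  have h1 := hT 1 (by decide)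
  have h3 := hT 3 (by decide)
  have h4 := hT 4 (by decide)
  have h5 := hT 5 (by decide)
  have h6 := hT 6 (by decide)
  have h7 := hT 7 (by decide)
  have h0 : v 0 = 0 := by
    linear_combination hsum - hv2 - h1 - h3 - h4 - h5 - h6 - h7 - 3 * v 0 * h2
  have hz : ∀ i : Fin 8, v i = 0 := by
    intro i
    by_cases hi : i = 2
    · rw [hi]; exact hv2
    · rw [hT i hi]; exact h0
  show v ∈ (⊥ : Submodule k (Fin 8 → k))
  rw [Submodule.mem_bot]
  funext i
  exact hz i

end Stmt13


open Stmt13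

/-- The natural 8-dimensional permutation module `k^8` over an algebraically closed field `k`
of characteristic 2, for the given subgroup `K` of the symmetric group (acting by permuting the
standard basis vectors, `g • v = fun i => v (g⁻¹ i)`, so that `g • e_i = e_(g i)`), is semisimple:
every `K`-invariant subspace admits a `K`-invariant direct complement. -/
theorem stmt_13 (k : Type*) [Field k] [IsAlgClosed k] [CharP k 2]
    (K : Subgroup (Equiv.Perm (Fin 8)))
    (hK : K = Subgroup.closure
      { c[(0 : Fin 8), 6, 4] * c[(1 : Fin 8), 5, 7],
      c[(0 : Fin 8), 1] * c[(4 : Fin 8), 7] * c[(5 : Fin 8), 6],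
      c[(0 : Fin 8), 1, 6, 4, 3, 7, 5] })
    (p : Submodule k (Fin 8 → k))
    (hp : ∀ g ∈ K, ∀ v ∈ p, (fun i => v (g⁻¹ i)) ∈ p) :
    ∃ q : Submodule k (Fin 8 → k),
      (∀ g ∈ K, ∀ v ∈ q, (fun i => v (g⁻¹ i)) ∈ q) ∧ IsCompl p q := by
  classical
  have h2 : (2 : k) = 0 := by exact_mod_cast CharP.cast_eq_zero k 2
  -- a primitive 7th root of unity
  obtain ⟨ζ, hζroot⟩ := IsAlgClosed.exists_root
    (Polynomial.X ^ 6 + Polynomial.X ^ 5 + Polynomial.X ^ 4 + Polynomial.X ^ 3 +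
      Polynomial.X ^ 2 + Polynomial.X + 1 : Polynomial k)
    (by
      have hd : (Polynomial.X ^ 6 + Polynomial.X ^ 5 + Polynomial.X ^ 4 + Polynomial.X ^ 3 +
          Polynomial.X ^ 2 + Polynomial.X + 1 : Polynomial k).degree = 6 := by
        compute_degree!
      rw [hd]
      decide)
  have heval : ζ ^ 6 + ζ ^ 5 + ζ ^ 4 + ζ ^ 3 + ζ ^ 2 + ζ + 1 = 0 := by
    simpa [Polynomial.IsRoot] using hζroot
  have hζ7 : ζ ^ 7 = 1 := by linear_combination (ζ - 1) * heval
  have hζ1 : ζ ≠ 1 := by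
    intro h
    rw [h] at heval
    exact one_ne_zero (α := k) (by linear_combination heval - 3 * h2)
  -- group elements
  have hσK : (c[(0 : Fin 8), 1, 6, 4, 3, 7, 5] : Equiv.Perm (Fin 8)) ∈ K := by
    rw [hK]; exact Subgroup.subset_closure (by simp)
  have hτK : ((c[(0 : Fin 8), 6, 4] * c[(1 : Fin 8), 5, 7]) *
      (c[(0 : Fin 8), 1] * c[(4 : Fin 8), 7] * c[(5 : Fin 8), 6]) : Equiv.Perm (Fin 8)) ∈ K := by
    rw [hK]
    exact Subgroup.mul_mem _ (Subgroup.subset_closure (by simp))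
      (Subgroup.subset_closure (by simp))
  have hσtab : ∀ i, (c[(0 : Fin 8), 1, 6, 4, 3, 7, 5] : Equiv.Perm (Fin 8))⁻¹ i = vs i := by
    decide
  have hτtab : ∀ i, ((c[(0 : Fin 8), 6, 4] * c[(1 : Fin 8), 5, 7]) *
      (c[(0 : Fin 8), 1] * c[(4 : Fin 8), 7] * c[(5 : Fin 8), 6]) : Equiv.Perm (Fin 8))⁻¹ i
      = ti i := by
    decide
  have hpς : ∀ v ∈ p, (fun i => v (vs i)) ∈ p := by
    intro v hv
    have h := hp (c[(0 : Fin 8), 1, 6, 4, 3, 7, 5]) hσK v hv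
    simpa only [hσtab] using h
  have hpτ : ∀ v ∈ p, (fun i => v (ti i)) ∈ p := by
    intro v hv
    have h := hp ((c[(0 : Fin 8), 6, 4] * c[(1 : Fin 8), 5, 7]) *
      (c[(0 : Fin 8), 1] * c[(4 : Fin 8), 7] * c[(5 : Fin 8), 6])) hτK v hv
    simpa only [hτtab] using h
  -- every element of K fixes the point 2
  have hfix : ∀ g ∈ K, g 2 = 2 := by
    intro g hg
    rw [hK] at hg
    refine Subgroup.closure_induction ?_ ?_ ?_ ?_ hg
    · intro x hx
      simp only [Set.mem_insert_iff, Set.mem_singleton_iff] at hx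
      rcases hx with rfl | rfl | rfl <;> decide
    · rfl
    · intro x y _ _ hx hy
      simp [Equiv.Perm.mul_apply, hy, hx]
    · intro x _ hx
      conv_lhs => rw [← hx]
      exact Equiv.symm_apply_apply x 2
  have hfixinv : ∀ g ∈ K, g⁻¹ 2 = 2 := fun g hg => hfix g⁻¹ (K.inv_mem hg)
  -- trivial action on Tsub
  have hTtriv : ∀ g ∈ K, ∀ v ∈ Tsub k, (fun i => v (g⁻¹ i)) = v := by
    intro g hg v hv
    have hv' : ∀ i : Fin 8, i ≠ 2 → v i = v 0 := hv
    funext i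
    by_cases hi : i = 2
    · subst hi; show v (g⁻¹ 2) = v 2; rw [hfixinv g hg]
    · have hgi : g⁻¹ i ≠ 2 := by
        intro hc
        apply hi
        have h22 : g⁻¹ i = g⁻¹ 2 := by rw [hc, hfixinv g hg]
        exact (Equiv.injective g⁻¹) h22
      show v (g⁻¹ i) = v i
      rw [hv' _ hgi, hv' _ hi]
  -- invariance of Ssub
  have hSinv : ∀ g ∈ K, ∀ v ∈ Ssub k, (fun i => v (g⁻¹ i)) ∈ Ssub k := by
    intro g hg v hv
    have hv' : v 2 = 0 ∧ ∑ i, v i = 0 := hv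
    refine ⟨?_, ?_⟩
    · show v (g⁻¹ 2) = 0
      rw [hfixinv g hg]; exact hv'.1
    · show (∑ i, v (g⁻¹ i)) = 0
      rw [Equiv.sum_comp g⁻¹ v]; exact hv'.2
  -- complement of p ⊓ T inside T
  obtain ⟨q0, hq0⟩ := Submodule.exists_isCompl (p ⊓ Tsub k)
  have hq0bot : (p ⊓ Tsub k) ⊓ q0 = ⊥ := disjoint_iff.mp hq0.disjoint
  have hq0top : (p ⊓ Tsub k) ⊔ q0 = ⊤ := codisjoint_iff.mp hq0.codisjoint
  have hqT_T : q0 ⊓ Tsub k ≤ Tsub k := inf_le_right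
  have hqTtriv : ∀ g ∈ K, ∀ v ∈ q0 ⊓ Tsub k, (fun i => v (g⁻¹ i)) ∈ q0 ⊓ Tsub k := by
    intro g hg v hv
    rw [hTtriv g hg v (hqT_T hv)]
    exact hv
  have hsupT : (p ⊓ Tsub k) ⊔ (q0 ⊓ Tsub k) = Tsub k := by
    apply le_antisymm
    · exact sup_le inf_le_right inf_le_right
    · intro t ht
      have ht' : t ∈ (p ⊓ Tsub k) ⊔ q0 := by rw [hq0top]; trivial
      obtain ⟨a, ha, b, hb, hab⟩ := Submodule.mem_sup.mp ht'
      have hbT : b ∈ Tsub k := by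
        have hbeq : b = t - a := by rw [← hab]; abel
        rw [hbeq]
        exact Submodule.sub_mem _ ht ha.2
      exact Submodule.mem_sup.mpr ⟨a, ha, b, ⟨hb, hbT⟩, hab⟩
  by_cases hS : Ssub k ≤ p
  · -- q := q0 ⊓ Tsub
    refine ⟨q0 ⊓ Tsub k, hqTtriv, IsCompl.of_eq ?_ ?_⟩
    · rw [eq_bot_iff]
      rintro v ⟨hvp, hvq⟩
      have hmem : v ∈ (p ⊓ Tsub k) ⊓ q0 := ⟨⟨hvp, hvq.2⟩, hvq.1⟩
      rwa [hq0bot] at hmem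
    · rw [eq_top_iff]
      intro v _
      have h1 : wv v ∈ p ⊔ (q0 ⊓ Tsub k) := by
        have hw : wv v ∈ (p ⊓ Tsub k) ⊔ (q0 ⊓ Tsub k) := by rw [hsupT]; exact wv_in_T v
        obtain ⟨a, ha, b, hb, hab⟩ := Submodule.mem_sup.mp hw
        exact Submodule.mem_sup.mpr ⟨a, ha.1, b, hb, hab⟩
      have h2s : v - wv v ∈ p ⊔ (q0 ⊓ Tsub k) :=
        le_sup_left (α := Submodule k (Fin 8 → k)) (hS (sub_wv_in_S h2 v))
      have hv : v = wv v + (v - wv v) := by abel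
      rw [hv]
      exact Submodule.add_mem _ h1 h2s
  · -- p ⊓ S = ⊥ case
    have hbot : p ⊓ Ssub k = ⊥ := by
      by_contra hne
      obtain ⟨w, hwmem, hw0⟩ := (Submodule.ne_bot_iff _).mp hne
      have hwS : w 2 = 0 ∧ ∑ i, w i = 0 := hwmem.2
      refine hS fun y hy => ?_
      have hy' : y 2 = 0 ∧ ∑ i, y i = 0 := hy
      exact key h2 hζ7 hζ1 p hpς hpτ w hwmem.1 hwS.1 hwS.2 hw0 y hy'.1 hy'.2
    have hpTle : p ≤ Tsub k := by
      intro v hv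
      have hwp : wv v ∈ p := wv_mem h2 p hpς v hv
      have hmem : v - wv v ∈ p ⊓ Ssub k := ⟨Submodule.sub_mem _ hv hwp, sub_wv_in_S h2 v⟩
      rw [hbot, Submodule.mem_bot, sub_eq_zero] at hmem
      rw [hmem]
      exact wv_in_T v
    refine ⟨(q0 ⊓ Tsub k) ⊔ Ssub k, ?_, IsCompl.of_eq ?_ ?_⟩
    · -- invariance
      intro g hg v hv
      obtain ⟨a, ha, b, hb, hab⟩ := Submodule.mem_sup.mp hv
      have hvab : (fun i => v (g⁻¹ i)) = a + (fun i => b (g⁻¹ i)) := by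
        funext i
        have haeq : a (g⁻¹ i) = a i := congrFun (hTtriv g hg a (hqT_T ha)) i
        calc v (g⁻¹ i) = a (g⁻¹ i) + b (g⁻¹ i) := by rw [← hab]; rfl
          _ = a i + b (g⁻¹ i) := by rw [haeq]
          _ = (a + fun i => b (g⁻¹ i)) i := rfl
      rw [hvab]
      exact Submodule.add_mem _ (Submodule.mem_sup_left ha)
        (Submodule.mem_sup_right (hSinv g hg b hb))
    · -- disjointness
      rw [eq_bot_iff]
      rintro v ⟨hvp, hvq⟩
      obtain ⟨a, ha, b, hb, hab⟩ := Submodule.mem_sup.mp hvq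
      have hvT : v ∈ Tsub k := hpTle hvp
      have hbT : b ∈ Tsub k := by
        have hbeq : b = v - a := by rw [← hab]; abel
        rw [hbeq]
        exact Submodule.sub_mem _ hvT (hqT_T ha)
      have hb0 : b = 0 := by
        have hmem : b ∈ Tsub k ⊓ Ssub k := ⟨hbT, hb⟩
        rwa [TS_inter h2, Submodule.mem_bot] at hmem
      have hva : v = a := by rw [← hab, hb0, add_zero]
      have hmem : v ∈ (p ⊓ Tsub k) ⊓ q0 := ⟨⟨hvp, hvT⟩, hva ▸ ha.1⟩
      rwa [hq0bot] at hmem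
    · -- sup = ⊤
      rw [eq_top_iff]
      intro v _
      have h1 : wv v ∈ p ⊔ ((q0 ⊓ Tsub k) ⊔ Ssub k) := by
        have hw : wv v ∈ (p ⊓ Tsub k) ⊔ (q0 ⊓ Tsub k) := by rw [hsupT]; exact wv_in_T v
        obtain ⟨a, ha, b, hb, hab⟩ := Submodule.mem_sup.mp hw
        exact Submodule.mem_sup.mpr ⟨a, ha.1, b, Submodule.mem_sup_left hb, hab⟩
      have h2s : v - wv v ∈ p ⊔ ((q0 ⊓ Tsub k) ⊔ Ssub k) :=
        le_sup_right (α := Submodule k (Fin 8 → k))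
          (Submodule.mem_sup_right (sub_wv_in_S h2 v))
      have hv : v = wv v + (v - wv v) := by abel
      rw [hv]
      exact Submodule.add_mem _ h1 h2s
end
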